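/- In the two-period longitudinal causal setup, the iterated conditional expectation (g-computation) identification holds: if Q₂ : Ω → ℝ is σ(L₀, A₀, L₁)-measurable, P-almost surely bounded, and satisfies Q₂ · g₁ = E[1_{A₁=1} · Y | σ(L₀, A₀, L₁)] P-almost surely, and Q₁ : Ω → ℝ is σ(L₀)-measurable, P-almost surely bounded, and satisfies Q₁ · g₀ = E[1_{A₀=1} · Q₂ | σ(L₀)] P-almost surely, then E[Q₁] = E[Y¹¹]. -/

import Mathlib

open MeasureTheory ProbabilityTheory

lemma aux_int_of_bdd {Ω : Type*} {mΩ : MeasurableSpace Ω} {P : Measure Ω}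
    [IsProbabilityMeasure P] {f : Ω → ℝ} (hf : AEStronglyMeasurable f P)
    (hb : ∃ B : ℝ, ∀ᵐ ω ∂P, |f ω| ≤ B) : Integrable f P := by
  obtain ⟨B, hB⟩ := hb
  exact Integrable.mono' (integrable_const B) hf
    (by filter_upwards [hB] with ω h using by simpa [Real.norm_eq_abs] using h)

/-- Redundant conditioning under conditional independence. -/
lemma condexp_indicator_sup_comap_of_condIndepFun
    {Ω β : Type*} (m' : MeasurableSpace Ω) {mβ : MeasurableSpace β}
    {mΩ : MeasurableSpace Ω} [StandardBorelSpace Ω]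
    (hm' : m' ≤ mΩ) {P : Measure Ω} [IsProbabilityMeasure P]
    {F : Ω → β} (hF : Measurable F)
    {Z : Ω → Bool} (hZ : Measurable Z)
    (hind : CondIndepFun m' hm' F Z P) :
    P[(fun ω => if Z ω then (1:ℝ) else 0) | m' ⊔ mβ.comap F]
      =ᵐ[P] P[(fun ω => if Z ω then (1:ℝ) else 0) | m'] := by
  set indZ : Ω → ℝ := fun ω => if Z ω then (1:ℝ) else 0 with hindZ_def
  have hZt : MeasurableSet (Z ⁻¹' {true}) := hZ (measurableSet_singleton true)
  have hindZ_eq : indZ = (Z ⁻¹' {true}).indicator (fun _ => (1:ℝ)) := by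
    funext ω
    by_cases h : Z ω = true <;> simp [hindZ_def, h, Set.indicator_apply]
  have hindZ_meas : Measurable indZ := by
    rw [hindZ_eq]; exact measurable_const.indicator hZt
  have hindZ_int : Integrable indZ P :=
    aux_int_of_bdd hindZ_meas.aestronglyMeasurable
      ⟨1, Filter.Eventually.of_forall fun ω => by
        by_cases h : Z ω = true <;> simp [hindZ_def, h]⟩
  have hM : m' ⊔ mβ.comap F ≤ mΩ := sup_le hm' hF.comap_le
  set h : Ω → ℝ := P[indZ | m'] with hh_def
  have hh_sm : StronglyMeasurable[m'] h := stronglyMeasurable_condExp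
  have hh_int : Integrable h P := integrable_condExp
  set C : Set (Set Ω) :=
    {s | ∃ a b, MeasurableSet[m'] a ∧ MeasurableSet[mβ.comap F] b ∧ s = a ∩ b} with hC_def
  have hgen : m' ⊔ mβ.comap F = MeasurableSpace.generateFrom C := by
    refine le_antisymm (sup_le ?_ ?_) (MeasurableSpace.generateFrom_le ?_)
    · exact fun s hs => MeasurableSpace.measurableSet_generateFrom
        ⟨s, Set.univ, hs, @MeasurableSet.univ Ω (mβ.comap F), (Set.inter_univ s).symm⟩
    · exact fun s hs => MeasurableSpace.measurableSet_generateFrom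
        ⟨Set.univ, s, @MeasurableSet.univ Ω m', hs, (Set.univ_inter s).symm⟩
    · rintro s ⟨a, b, ha, hb, rfl⟩
      exact ((le_sup_left : m' ≤ m' ⊔ mβ.comap F) a ha).inter
        ((le_sup_right : mβ.comap F ≤ m' ⊔ mβ.comap F) b hb)
  have hpi : IsPiSystem C := by
    rintro s ⟨a1, b1, ha1, hb1, rfl⟩ t ⟨a2, b2, ha2, hb2, rfl⟩ -
    exact ⟨a1 ∩ a2, b1 ∩ b2, ha1.inter ha2, hb1.inter hb2, by
      rw [Set.inter_inter_inter_comm]⟩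
  have hiff := (condIndepFun_iff_condExp_inter_preimage_eq_mul
    (m' := m') (hm' := hm') (μ := P) hF hZ).mp hind
  have key : ∀ s, MeasurableSet[m' ⊔ mβ.comap F] s →
      ∫ x in s, h x ∂P = ∫ x in s, indZ x ∂P := by
    have hbasic : ∀ t ∈ C, ∫ x in t, h x ∂P = ∫ x in t, indZ x ∂P := by
      rintro t ⟨a, b, ha, hb, rfl⟩
      obtain ⟨u, hu, hbu⟩ := hb
      have haΩ : MeasurableSet a := hm' a ha
      have hbΩ : MeasurableSet b := hF.comap_le b ⟨u, hu, hbu⟩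
      set indb : Ω → ℝ := b.indicator (fun _ => (1:ℝ)) with hindb_def
      have hindb_meas : Measurable indb := measurable_const.indicator hbΩ
      have hindb_int : Integrable indb P :=
        aux_int_of_bdd hindb_meas.aestronglyMeasurable
          ⟨1, Filter.Eventually.of_forall fun ω => by
            by_cases hx : ω ∈ b <;> simp [hindb_def, hx]⟩
      have hprod_int : Integrable (h * indb) P := by
        have : Integrable (fun x => indb x * h x) P :=
          hh_int.bdd_mul (c := 1) hindb_meas.aestronglyMeasurable
            (Filter.Eventually.of_forall (fun x => by
              by_cases hx : x ∈ b <;> simp [hindb_def, hx]))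
        exact this.congr (Filter.Eventually.of_forall fun x => mul_comm _ _)
      have hpull : P[h * indb | m'] =ᵐ[P] h * P[indb | m'] :=
        condExp_mul_of_stronglyMeasurable_left hh_sm hprod_int hindb_int
      have hmul : P[(b ∩ Z ⁻¹' {true}).indicator (fun _ => (1:ℝ)) | m'] =ᵐ[P]
          fun ω => (P[indb | m']) ω * h ω := by
        have h1 := hiff u {true} hu (measurableSet_singleton true)
        rw [hbu] at h1
        simpa [hindb_def, hh_def, hindZ_eq] using h1
      have hint2 : Integrable ((b ∩ Z ⁻¹' {true}).indicator (fun _ => (1:ℝ))) P :=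
        aux_int_of_bdd (measurable_const.indicator (hbΩ.inter hZt)).aestronglyMeasurable
          ⟨1, Filter.Eventually.of_forall fun ω => by
            by_cases hx : ω ∈ b ∩ Z ⁻¹' {true} <;> simp [hx]⟩
      -- left side
      have hleft : ∫ x in a ∩ b, h x ∂P = ∫ x in a, (h * P[indb|m']) x ∂P := by
        rw [← setIntegral_indicator hbΩ]
        have e1 : ∀ x, b.indicator h x = (h * indb) x := by
          intro x; by_cases hx : x ∈ b <;> simp [hindb_def, hx]
        rw [integral_congr_ae (Filter.Eventually.of_forall fun x => e1 x),
          ← setIntegral_condExp hm' hprod_int ha]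
        exact setIntegral_congr_ae (hm' a ha) (hpull.mono fun x hx _ => hx)
      -- right side
      have hright : ∫ x in a ∩ b, indZ x ∂P = ∫ x in a, (h * P[indb|m']) x ∂P := by
        rw [← setIntegral_indicator hbΩ]
        have e1 : ∀ x, b.indicator indZ x = (b ∩ Z ⁻¹' {true}).indicator (fun _ => (1:ℝ)) x := by
          intro x; rw [hindZ_eq, Set.indicator_indicator]
        rw [integral_congr_ae (Filter.Eventually.of_forall fun x => e1 x),
          ← setIntegral_condExp hm' hint2 ha]
        refine setIntegral_congr_ae (hm' a ha) (hmul.mono fun x hx _ => ?_)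
        rw [hx]; exact mul_comm _ _
      rw [hleft, hright]
    have hcompl : ∀ t, MeasurableSet[m' ⊔ mβ.comap F] t →
        (∫ x in t, h x ∂P = ∫ x in t, indZ x ∂P) →
        ∫ x in tᶜ, h x ∂P = ∫ x in tᶜ, indZ x ∂P := by
      intro t htm heq
      have h1 := integral_add_compl (hM t htm) hh_int
      have h2 := integral_add_compl (hM t htm) hindZ_int
      have h3 : ∫ x, h x ∂P = ∫ x, indZ x ∂P := integral_condExp hm'
      linarith
    have hunion : ∀ f : ℕ → Set Ω, Pairwise (Function.onFun Disjoint f) →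
        (∀ i, MeasurableSet[m' ⊔ mβ.comap F] (f i)) →
        (∀ i, ∫ x in f i, h x ∂P = ∫ x in f i, indZ x ∂P) →
        ∫ x in ⋃ i, f i, h x ∂P = ∫ x in ⋃ i, f i, indZ x ∂P := by
      intro f hdisj hfm heq
      rw [integral_iUnion (fun i => hM _ (hfm i)) hdisj hh_int.integrableOn,
        integral_iUnion (fun i => hM _ (hfm i)) hdisj hindZ_int.integrableOn]
      exact tsum_congr heq
    intro s hs
    exact @MeasurableSpace.induction_on_inter Ω (m' ⊔ mβ.comap F)
      (fun t _ => ∫ x in t, h x ∂P = ∫ x in t, indZ x ∂P) C hgen hpi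
      (by simp) hbasic hcompl hunion s hs
  haveI : SigmaFinite (P.trim hM) := inferInstance
  exact (ae_eq_condExp_of_forall_setIntegral_eq hM hindZ_int
    (fun s _ _ => hh_int.integrableOn)
    (fun s hs _ => key s hs)
    ((hh_sm.mono (le_sup_left : m' ≤ m' ⊔ mβ.comap F)).aestronglyMeasurable (μ := P))).symm

/-- Product rule for conditional expectation under conditional independence. -/
lemma condexp_indicator_mul_of_condIndepFun
    {Ω : Type*} (m' : MeasurableSpace Ω)
    {mΩ : MeasurableSpace Ω} [StandardBorelSpace Ω]
    (hm' : m' ≤ mΩ) {P : Measure Ω} [IsProbabilityMeasure P]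
    {F : Ω → ℝ} (hF : Measurable F) (hFbdd : ∃ B : ℝ, ∀ᵐ ω ∂P, |F ω| ≤ B)
    {Z : Ω → Bool} (hZ : Measurable Z)
    (hind : CondIndepFun m' hm' F Z P) :
    P[(fun ω => (if Z ω then (1:ℝ) else 0) * F ω) | m']
      =ᵐ[P] fun ω => (P[(fun ω => if Z ω then (1:ℝ) else 0) | m']) ω * (P[F | m']) ω := by
  obtain ⟨B, hB⟩ := hFbdd
  set indZ : Ω → ℝ := fun ω => if Z ω then (1:ℝ) else 0 with hindZ_def
  have hZt : MeasurableSet (Z ⁻¹' {true}) := hZ (measurableSet_singleton true)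
  have hindZ_meas : Measurable indZ := by
    have : indZ = (Z ⁻¹' {true}).indicator (fun _ => (1:ℝ)) := by
      funext ω; by_cases h : Z ω = true <;> simp [hindZ_def, h, Set.indicator_apply]
    rw [this]; exact measurable_const.indicator hZt
  have hindZ_le : ∀ ω, ‖indZ ω‖ ≤ 1 := fun ω => by
    by_cases h : Z ω = true <;> simp [hindZ_def, h]
  have hindZ_int : Integrable indZ P :=
    aux_int_of_bdd hindZ_meas.aestronglyMeasurable
      ⟨1, Filter.Eventually.of_forall fun ω => by
        by_cases h : Z ω = true <;> simp [hindZ_def, h]⟩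
  have hFint : Integrable F P := aux_int_of_bdd hF.aestronglyMeasurable ⟨B, hB⟩
  have hFnorm : ∀ᵐ ω ∂P, ‖F ω‖ ≤ B := by
    filter_upwards [hB] with ω h using by simpa [Real.norm_eq_abs] using h
  have hMle : m' ⊔ MeasurableSpace.comap F inferInstance ≤ mΩ := sup_le hm' hF.comap_le
  have hFM : Measurable[m' ⊔ MeasurableSpace.comap F inferInstance] F :=
    measurable_iff_comap_le.mpr le_sup_right
  have hFindZ_int : Integrable (F * indZ) P := by
    have : Integrable (fun x => indZ x * F x) P :=
      hFint.bdd_mul (c := 1) hindZ_meas.aestronglyMeasurable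
        (Filter.Eventually.of_forall hindZ_le)
    exact this.congr (Filter.Eventually.of_forall fun x => mul_comm _ _)
  have hR := condexp_indicator_sup_comap_of_condIndepFun m' hm' hF hZ hind
  have step3 : P[F * indZ | m' ⊔ MeasurableSpace.comap F inferInstance] =ᵐ[P]
      F * P[indZ | m' ⊔ MeasurableSpace.comap F inferInstance] :=
    condExp_mul_of_stronglyMeasurable_left hFM.stronglyMeasurable hFindZ_int hindZ_int
  have step4 : F * P[indZ | m' ⊔ MeasurableSpace.comap F inferInstance]
      =ᵐ[P] fun ω => F ω * (P[indZ|m']) ω := by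
    filter_upwards [hR] with ω hω
    simp only [Pi.mul_apply]
    rw [hω]
  have hcc : P[P[F * indZ | m' ⊔ MeasurableSpace.comap F inferInstance] | m']
      =ᵐ[P] P[F * indZ | m'] := condExp_condExp_of_le le_sup_left hMle
  have step5 : P[F * indZ | m'] =ᵐ[P] P[(fun ω => F ω * (P[indZ|m']) ω) | m'] :=
    hcc.symm.trans (condExp_congr_ae (step3.trans step4))
  have hh_int2 : Integrable (P[indZ|m'] * F) P := by
    have : Integrable (fun x => F x * (P[indZ|m']) x) P :=
      integrable_condExp.bdd_mul (c := B) hF.aestronglyMeasurable hFnorm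
    exact this.congr (Filter.Eventually.of_forall fun x => mul_comm _ _)
  have step6 : P[P[indZ|m'] * F | m'] =ᵐ[P] P[indZ|m'] * P[F|m'] :=
    condExp_mul_of_stronglyMeasurable_left stronglyMeasurable_condExp hh_int2 hFint
  calc P[(fun ω => indZ ω * F ω) | m']
      =ᵐ[P] P[F * indZ | m'] :=
        condExp_congr_ae (Filter.Eventually.of_forall fun ω => mul_comm _ _)
    _ =ᵐ[P] P[(fun ω => F ω * (P[indZ|m']) ω) | m'] := step5
    _ =ᵐ[P] P[P[indZ|m'] * F | m'] :=
        condExp_congr_ae (Filter.Eventually.of_forall fun ω => mul_comm _ _)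
    _ =ᵐ[P] P[indZ|m'] * P[F|m'] := step6

/-- Two-period iterated conditional expectation (g-computation) identification:
if `Q₂` is `σ(L₀, A₀, L₁)`-measurable with `Q₂ · g₁ = E[1_{A₁=1} · Y | σ(L₀, A₀, L₁)]` a.s.
and `Q₁` is `σ(L₀)`-measurable with `Q₁ · g₀ = E[1_{A₀=1} · Q₂ | σ(L₀)]` a.s., then
`E[Q₁] = E[Y¹¹]`. -/
theorem longitudinal_gcomp_identification
    {Ω S₀ S₁ : Type*} [MeasurableSpace Ω] [StandardBorelSpace Ω] [Nonempty Ω]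
    [MeasurableSpace S₀] [StandardBorelSpace S₀]
    [MeasurableSpace S₁] [StandardBorelSpace S₁]
    (P : Measure Ω) [IsProbabilityMeasure P]
    (L0 : Ω → S₀) (hL0 : Measurable L0)
    (A0 : Ω → Bool) (hA0 : Measurable A0)
    (L1 : Ω → S₁) (hL1 : Measurable L1)
    (A1 : Ω → Bool) (hA1 : Measurable A1)
    (Y : Ω → ℝ) (hY : Measurable Y)
    (L1p : Ω → S₁) (hL1p : Measurable L1p)
    (Y11 : Ω → ℝ) (hY11 : Measurable Y11)
    (hYbdd : ∃ B : ℝ, ∀ᵐ ω ∂P, |Y ω| ≤ B)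
    (hY11bdd : ∃ B : ℝ, ∀ᵐ ω ∂P, |Y11 ω| ≤ B)
    -- consistency
    (hconsL : ∀ᵐ ω ∂P, A0 ω = true → L1 ω = L1p ω)
    (hconsY : ∀ᵐ ω ∂P, A0 ω = true → A1 ω = true → Y ω = Y11 ω)
    -- sequential exchangeability: (L₁¹, Y¹¹) ⫫ A₀ | σ(L₀) and Y¹¹ ⫫ A₁ | σ(L₀, A₀, L₁)
    (hexch0 : CondIndepFun (MeasurableSpace.comap L0 inferInstance) hL0.comap_le
      (fun ω => (L1p ω, Y11 ω)) A0 P)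
    (hexch1 : CondIndepFun
      (MeasurableSpace.comap (fun ω => (L0 ω, A0 ω, L1 ω)) inferInstance)
      (hL0.prodMk (hA0.prodMk hL1)).comap_le Y11 A1 P)
    -- propensities
    (g0 g1 : Ω → ℝ)
    (hg0 : g0 =ᵐ[P]
      P[(fun ω => if A0 ω then (1 : ℝ) else 0) | MeasurableSpace.comap L0 inferInstance])
    (hg1 : g1 =ᵐ[P]
      P[(fun ω => if A1 ω then (1 : ℝ) else 0) |
        MeasurableSpace.comap (fun ω => (L0 ω, A0 ω, L1 ω)) inferInstance])
    -- positivity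
    (η : ℝ) (hη : 0 < η) (hpos0 : ∀ᵐ ω ∂P, η ≤ g0 ω) (hpos1 : ∀ᵐ ω ∂P, η ≤ g1 ω)
    -- iterated conditional mean outcomes
    (Q2 : Ω → ℝ)
    (hQ2_meas :
      Measurable[MeasurableSpace.comap (fun ω => (L0 ω, A0 ω, L1 ω)) inferInstance] Q2)
    (hQ2_bdd : ∃ B : ℝ, ∀ᵐ ω ∂P, |Q2 ω| ≤ B)
    (hQ2 : (fun ω => Q2 ω * g1 ω) =ᵐ[P]
      P[(fun ω => (if A1 ω then (1 : ℝ) else 0) * Y ω) |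
        MeasurableSpace.comap (fun ω => (L0 ω, A0 ω, L1 ω)) inferInstance])
    (Q1 : Ω → ℝ)
    (hQ1_meas : Measurable[MeasurableSpace.comap L0 inferInstance] Q1)
    (hQ1_bdd : ∃ B : ℝ, ∀ᵐ ω ∂P, |Q1 ω| ≤ B)
    (hQ1 : (fun ω => Q1 ω * g0 ω) =ᵐ[P]
      P[(fun ω => (if A0 ω then (1 : ℝ) else 0) * Q2 ω) |
        MeasurableSpace.comap L0 inferInstance]) :
    ∫ ω, Q1 ω ∂P = ∫ ω, Y11 ω ∂P := by
  have hm0 := hL0.comap_le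
  have hm1 := (hL0.prodMk (hA0.prodMk hL1)).comap_le
  have hm01 : MeasurableSpace.comap L0 inferInstance ≤
      MeasurableSpace.comap (fun ω => (L0 ω, A0 ω, L1 ω)) inferInstance := by
    rintro s ⟨u, hu, rfl⟩
    exact ⟨Prod.fst ⁻¹' u, measurable_fst hu, rfl⟩
  set iA0 : Ω → ℝ := fun ω => if A0 ω then (1:ℝ) else 0 with hiA0_def
  set iA1 : Ω → ℝ := fun ω => if A1 ω then (1:ℝ) else 0 with hiA1_def
  have hiA0_meas : Measurable iA0 := (measurable_of_countable (fun b : Bool => if b then (1:ℝ) else 0)).comp hA0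
  have hiA1_meas : Measurable iA1 := (measurable_of_countable (fun b : Bool => if b then (1:ℝ) else 0)).comp hA1
  have hiA0_le : ∀ ω, ‖iA0 ω‖ ≤ 1 := fun ω => by
    by_cases h : A0 ω = true <;> simp [hiA0_def, h]
  have hiA1_le : ∀ ω, ‖iA1 ω‖ ≤ 1 := fun ω => by
    by_cases h : A1 ω = true <;> simp [hiA1_def, h]
  -- strongly measurable wrt σ(L0,A0,L1)
  have hiA0_m1 : StronglyMeasurable[MeasurableSpace.comap
      (fun ω => (L0 ω, A0 ω, L1 ω)) inferInstance] iA0 := by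
    have h1 : Measurable[MeasurableSpace.comap (fun ω => (L0 ω, A0 ω, L1 ω)) inferInstance]
        (fun ω => (L0 ω, A0 ω, L1 ω)) := measurable_iff_comap_le.mpr le_rfl
    exact (((measurable_of_countable (fun b : Bool => if b then (1:ℝ) else 0)).comp
      (measurable_fst.comp measurable_snd)).comp h1).stronglyMeasurable
  -- integrability
  have intY : Integrable Y P := aux_int_of_bdd hY.aestronglyMeasurable hYbdd
  have intY11 : Integrable Y11 P := aux_int_of_bdd hY11.aestronglyMeasurable hY11bdd
  have int_iA1Y : Integrable (iA1 * Y) P :=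
    intY.bdd_mul (c := 1) hiA1_meas.aestronglyMeasurable (Filter.Eventually.of_forall hiA1_le)
  have int_iA1Y11 : Integrable (iA1 * Y11) P :=
    intY11.bdd_mul (c := 1) hiA1_meas.aestronglyMeasurable (Filter.Eventually.of_forall hiA1_le)
  have int_iA0iA1Y : Integrable (iA0 * (iA1 * Y)) P :=
    int_iA1Y.bdd_mul (c := 1) hiA0_meas.aestronglyMeasurable (Filter.Eventually.of_forall hiA0_le)
  have int_iA0iA1Y11 : Integrable (iA0 * (iA1 * Y11)) P :=
    int_iA1Y11.bdd_mul (c := 1) hiA0_meas.aestronglyMeasurable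
      (Filter.Eventually.of_forall hiA0_le)
  have int_iA0Y11 : Integrable (iA0 * Y11) P :=
    intY11.bdd_mul (c := 1) hiA0_meas.aestronglyMeasurable (Filter.Eventually.of_forall hiA0_le)
  -- conditional independence at time 1
  have hx1 : P[iA1 * Y11 | MeasurableSpace.comap (fun ω => (L0 ω, A0 ω, L1 ω)) inferInstance]
      =ᵐ[P] fun ω =>
        (P[iA1 | MeasurableSpace.comap (fun ω => (L0 ω, A0 ω, L1 ω)) inferInstance]) ω *
        (P[Y11 | MeasurableSpace.comap (fun ω => (L0 ω, A0 ω, L1 ω)) inferInstance]) ω :=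
    condexp_indicator_mul_of_condIndepFun _ hm1 hY11 hY11bdd hA1 hexch1
  have hQ2' : (fun ω => Q2 ω * g1 ω) =ᵐ[P]
      P[iA1 * Y | MeasurableSpace.comap (fun ω => (L0 ω, A0 ω, L1 ω)) inferInstance] := hQ2
  have hQ1'' : (fun ω => Q1 ω * g0 ω) =ᵐ[P]
      P[iA0 * Q2 | MeasurableSpace.comap L0 inferInstance] := hQ1
  -- pull-out of the A0 indicator at level m1
  have hpull1 : P[iA0 * (iA1 * Y) |
      MeasurableSpace.comap (fun ω => (L0 ω, A0 ω, L1 ω)) inferInstance] =ᵐ[P]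
      iA0 * P[iA1 * Y | MeasurableSpace.comap (fun ω => (L0 ω, A0 ω, L1 ω)) inferInstance] :=
    condExp_mul_of_stronglyMeasurable_left hiA0_m1 int_iA0iA1Y int_iA1Y
  have hpull1' : P[iA0 * (iA1 * Y11) |
      MeasurableSpace.comap (fun ω => (L0 ω, A0 ω, L1 ω)) inferInstance] =ᵐ[P]
      iA0 * P[iA1 * Y11 | MeasurableSpace.comap (fun ω => (L0 ω, A0 ω, L1 ω)) inferInstance] :=
    condExp_mul_of_stronglyMeasurable_left hiA0_m1 int_iA0iA1Y11 int_iA1Y11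
  have hpull0 : P[iA0 * Y11 |
      MeasurableSpace.comap (fun ω => (L0 ω, A0 ω, L1 ω)) inferInstance] =ᵐ[P]
      iA0 * P[Y11 | MeasurableSpace.comap (fun ω => (L0 ω, A0 ω, L1 ω)) inferInstance] :=
    condExp_mul_of_stronglyMeasurable_left hiA0_m1 int_iA0Y11 intY11
  -- consistency
  have hconsMul : iA0 * (iA1 * Y) =ᵐ[P] iA0 * (iA1 * Y11) := by
    filter_upwards [hconsY] with ω hω
    simp only [Pi.mul_apply]
    by_cases h0 : A0 ω = true
    · by_cases h1 : A1 ω = true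
      · simp [hiA0_def, hiA1_def, h0, h1, hω h0 h1]
      · simp [hiA1_def, h1]
    · simp [hiA0_def, h0]
  have e1 : iA0 * P[iA1 * Y | MeasurableSpace.comap (fun ω => (L0 ω, A0 ω, L1 ω)) inferInstance]
      =ᵐ[P] iA0 * P[iA1 * Y11 |
        MeasurableSpace.comap (fun ω => (L0 ω, A0 ω, L1 ω)) inferInstance] :=
    (hpull1.symm.trans (condExp_congr_ae hconsMul)).trans hpull1'
  -- key identity at time 1
  have hstar : iA0 * Q2 =ᵐ[P]
      iA0 * P[Y11 | MeasurableSpace.comap (fun ω => (L0 ω, A0 ω, L1 ω)) inferInstance] := by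
    have hkey1 : (fun ω => (iA0 ω * Q2 ω) * g1 ω) =ᵐ[P] fun ω => (iA0 ω *
        (P[Y11 | MeasurableSpace.comap (fun ω => (L0 ω, A0 ω, L1 ω)) inferInstance]) ω)
          * g1 ω := by
      filter_upwards [hQ2', e1, hx1, hg1] with ω h2 h3 h4 h5
      simp only [Pi.mul_apply] at h3
      calc (iA0 ω * Q2 ω) * g1 ω
          = iA0 ω * (Q2 ω * g1 ω) := by ring
        _ = iA0 ω * (P[iA1 * Y |
              MeasurableSpace.comap (fun ω => (L0 ω, A0 ω, L1 ω)) inferInstance]) ω := by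
            rw [h2]
        _ = iA0 ω * (P[iA1 * Y11 |
              MeasurableSpace.comap (fun ω => (L0 ω, A0 ω, L1 ω)) inferInstance]) ω := h3
        _ = iA0 ω * ((P[iA1 |
              MeasurableSpace.comap (fun ω => (L0 ω, A0 ω, L1 ω)) inferInstance]) ω *
              (P[Y11 | MeasurableSpace.comap (fun ω => (L0 ω, A0 ω, L1 ω)) inferInstance]) ω) := by
            rw [h4]
        _ = (iA0 ω *
              (P[Y11 | MeasurableSpace.comap (fun ω => (L0 ω, A0 ω, L1 ω)) inferInstance]) ω)
              * g1 ω := by rw [h5]; ring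
    filter_upwards [hkey1, hpos1] with ω h1 h2
    simp only [Pi.mul_apply]
    exact mul_right_cancel₀ (ne_of_gt (lt_of_lt_of_le hη h2)) h1
  -- conditional independence at time 0
  have hY11A0 : CondIndepFun (MeasurableSpace.comap L0 inferInstance) hL0.comap_le Y11 A0 P :=
    hexch0.comp measurable_snd measurable_id
  have f4 : P[iA0 * Y11 | MeasurableSpace.comap L0 inferInstance] =ᵐ[P]
      fun ω => (P[iA0 | MeasurableSpace.comap L0 inferInstance]) ω *
        (P[Y11 | MeasurableSpace.comap L0 inferInstance]) ω :=
    condexp_indicator_mul_of_condIndepFun _ hm0 hY11 hY11bdd hA0 hY11A0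
  have f3 : P[P[iA0 * Y11 | MeasurableSpace.comap (fun ω => (L0 ω, A0 ω, L1 ω)) inferInstance] |
      MeasurableSpace.comap L0 inferInstance] =ᵐ[P]
      P[iA0 * Y11 | MeasurableSpace.comap L0 inferInstance] :=
    condExp_condExp_of_le hm01 hm1
  have H : P[iA0 * Q2 | MeasurableSpace.comap L0 inferInstance] =ᵐ[P]
      fun ω => (P[iA0 | MeasurableSpace.comap L0 inferInstance]) ω *
        (P[Y11 | MeasurableSpace.comap L0 inferInstance]) ω :=
    (condExp_congr_ae hstar).trans ((condExp_congr_ae hpull0.symm).trans (f3.trans f4))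
  have hQ1' : (fun ω => Q1 ω * g0 ω) =ᵐ[P]
      fun ω => (P[Y11 | MeasurableSpace.comap L0 inferInstance]) ω * g0 ω := by
    filter_upwards [hQ1'', H, hg0] with ω h1 h2 h3
    rw [h1, h2, h3]
    ring
  have hQ1eq : Q1 =ᵐ[P] P[Y11 | MeasurableSpace.comap L0 inferInstance] := by
    filter_upwards [hQ1', hpos0] with ω h1 h2
    exact mul_right_cancel₀ (ne_of_gt (lt_of_lt_of_le hη h2)) h1
  calc ∫ ω, Q1 ω ∂P
      = ∫ ω, (P[Y11 | MeasurableSpace.comap L0 inferInstance]) ω ∂P := integral_congr_ae hQ1eq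
    _ = ∫ ω, Y11 ω ∂P := integral_condExp hm0
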